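/- Let Φ be a median algebra and define the iterated operation μ(x₁;b)=x₁, μ(x₁,…,x_{k+1};b)=μ(μ(x₁,…,x_k;b), x_{k+1}, b). Then the value μ(x₁,…,xₙ;b) is invariant under any permutation of the points x₁,…,xₙ. -/

import Mathlib

structure MedianAlgebra (Phi : Type*) where
  med : Phi → Phi → Phi → Phi
  m1a : ∀ a b c, med a b c = med b c a
  m1b : ∀ a b c, med a b c = med b a c
  m2 : ∀ a b, med a a b = a
  m3 : ∀ a b c d e, med a b (med c d e) = med (med a b c) (med a b d) e

/-- Iterated median μ(x₁,…,xₙ;b): μ(x₁;b)=x₁, μ(x₁,…,x_{k+1};b)=μ(μ(x₁,…,x_k;b),x_{k+1},b). -/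
def iterMed {Phi : Type*} (M : MedianAlgebra Phi) (b : Phi) : List Phi → Phi
  | [] => b
  | x :: xs => xs.foldl (fun acc y => M.med acc y b) x

section Aux

variable {Phi : Type*} (M : MedianAlgebra Phi) (b : Phi)

/-- `g x y = med x y b` is commutative. -/
lemma med_comm (x y : Phi) : M.med x y b = M.med y x b := M.m1b x y b

/-- Idempotence of `g`. -/
lemma med_idem (x : Phi) : M.med x x b = x := M.m2 x b

/-- Left-commutativity: `g (g a x) y = g (g a y) x`. -/
lemma med_lcomm (a x y : Phi) :
    M.med (M.med a x b) y b = M.med (M.med a y b) x b := by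
  calc M.med (M.med a x b) y b
      = M.med y b (M.med a x b) := M.m1a _ _ _
    _ = M.med y b (M.med b a x) := by rw [← M.m1a b a x]
    _ = M.med (M.med y b b) (M.med y b a) x := M.m3 _ _ _ _ _
    _ = M.med b (M.med y b a) x := by rw [M.m1a y b b, M.m2]
    _ = M.med (M.med y b a) x b := M.m1a _ _ _
    _ = M.med (M.med a y b) x b := by rw [M.m1a y b a, M.m1a b a y]

/-- foldl of `g` over a nonempty list is permutation invariant (whole list, fixed init). -/
lemma foldl_perm (a : Phi) {l₁ l₂ : List Phi} (h : l₁.Perm l₂) :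
    l₁.foldl (fun acc y => M.med acc y b) a = l₂.foldl (fun acc y => M.med acc y b) a :=
  h.foldl_eq' (fun x _ y _ z => med_lcomm M b z x y) a

end Aux

theorem stmt1 {Phi : Type*} (M : MedianAlgebra Phi) (b : Phi)
    (l₁ l₂ : List Phi) (hne : l₁ ≠ []) (hperm : l₁.Perm l₂) :
    iterMed M b l₁ = iterMed M b l₂ := by
  obtain ⟨x, xs, rfl⟩ := List.exists_cons_of_ne_nil hne
  have hne₂ : l₂ ≠ [] := fun h => by simp [h] at hperm
  obtain ⟨y, ys, rfl⟩ := List.exists_cons_of_ne_nil hne₂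
  -- rewrite both sides as folds over the full lists, using idempotence to prepend the head
  have key : ∀ (z : Phi) (l : List Phi),
      iterMed M b (z :: l) = (z :: l).foldl (fun acc y => M.med acc y b) z := by
    intro z l
    simp [iterMed, List.foldl_cons, M.m2]
  rw [key, key]
  rw [foldl_perm M b x hperm]
  -- goal: foldl g x (y::ys) = foldl g y (y::ys)
  simp only [List.foldl_cons, M.m2]
  -- goal: foldl g (g x y) ys = foldl g y ys, with x ∈ y :: ys
  have hx : x ∈ y :: ys := hperm.mem_iff.mp (List.mem_cons_self (a := x) (l := xs))
  rcases List.mem_cons.mp hx with rfl | hx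
  · rw [M.m2]
  · -- x ∈ ys : pull x to the front of ys
    haveI := Classical.decEq Phi
    have hys' : ys.Perm (x :: ys.erase x) := List.perm_cons_erase hx
    rw [foldl_perm M b _ hys', foldl_perm M b y hys']
    simp only [List.foldl_cons]
    rw [med_lcomm, M.m2, med_comm M b y x]
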